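/- arXiv:2502.18011 — 2 statements merged into one kernel-verified Lean document; each statement's English description precedes it below -/
import Mathlib

section
/- Let δ = √2/3 and b = -1/2 + i/(2√3). Let A be the 6×6 complex matrix with rows (1, conj(b), b, -δ, 2δ, -δ), (b, 1, conj(b), -δ, -δ, 2δ), (conj(b), b, 1, 2δ, -δ, -δ), (-δ, -δ, 2δ, 1, b, conj(b)), (2δ, -δ, -δ, conj(b), 1, b), (-δ, 2δ, -δ, b, conj(b), 1). Then A is Hermitian, positive semidefinite, A² = 3A, and A has rank 2. -/
open scoped ComplexOrder

private lemma cons_val_five {m : ℕ} {α : Type*} (x : α) (u : Fin (m + 1 + 1 + 1 + 1 + 1) → α) :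
    Matrix.vecCons x u 5 =
      Matrix.vecHead (Matrix.vecTail (Matrix.vecTail (Matrix.vecTail (Matrix.vecTail u)))) :=
  rfl

set_option maxHeartbeats 1600000 in
/-- With `δ = √2/3` and `b = -1/2 + i/(2√3)`, the displayed `6×6` matrix `A` is
Hermitian, positive semidefinite, satisfies `A² = 3A`, and has rank `2`. -/
theorem stmt_11 :
    let δ : ℂ := (Real.sqrt 2 : ℂ) / 3
    let b : ℂ := -(1 / 2) + Complex.I / (2 * (Real.sqrt 3 : ℂ))
    let A : Matrix (Fin 6) (Fin 6) ℂ := Matrix.of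
      ![![1, star b, b, -δ, 2 * δ, -δ],
        ![b, 1, star b, -δ, -δ, 2 * δ],
        ![star b, b, 1, 2 * δ, -δ, -δ],
        ![-δ, -δ, 2 * δ, 1, b, star b],
        ![2 * δ, -δ, -δ, star b, 1, b],
        ![-δ, 2 * δ, -δ, b, star b, 1]]
    A.IsHermitian ∧ A.PosSemidef ∧ A * A = (3 : ℂ) • A ∧ A.rank = 2 := by
  intro δ b A
  set x : ℂ := (Real.sqrt 2 : ℂ) with hxdef
  set y : ℂ := (Real.sqrt 3 : ℂ) with hydef
  have hy0 : y ≠ 0 := by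
    simp [hydef, Complex.ofReal_eq_zero, Real.sqrt_eq_zero']
  have hx : x^2 = 2 := by
    rw [hxdef, ← Complex.ofReal_pow, Real.sq_sqrt (by norm_num : (2:ℝ) ≥ 0)]; norm_num
  have hy : y^2 = 3 := by
    rw [hydef, ← Complex.ofReal_pow, Real.sq_sqrt (by norm_num : (3:ℝ) ≥ 0)]; norm_num
  have hI : Complex.I^2 = -1 := Complex.I_sq
  have hsy : (starRingEnd ℂ) y = y := by rw [hydef]; exact Complex.conj_ofReal _
  have hb : b = -(1/2) + Complex.I * y / 6 := by
    show -(1 / 2) + Complex.I / (2 * y) = _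
    field_simp
    linear_combination (-2) * Complex.I * hy
  have hsb : star b = -(1/2) - Complex.I * y / 6 := by
    rw [hb, hydef]
    simp [Complex.star_def, map_add, map_neg, map_div₀, Complex.conj_I, Complex.conj_ofReal]
    ring
  have hd : δ = x/3 := rfl
  have hH : A.IsHermitian := by
    ext i j
    fin_cases i <;> fin_cases j <;>
      simp [A, Matrix.conjTranspose_apply, Matrix.cons_val_two, Matrix.cons_val_three,
        Matrix.cons_val_four, cons_val_five, Matrix.vecHead, Matrix.vecTail, hb, hsb, hd,
        hxdef, hydef, Complex.star_def, map_add, map_sub, map_div₀, map_neg, map_mul,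
        Complex.conj_I, Complex.conj_ofReal, map_ofNat] <;> ring
  have hM : A * A = (3 : ℂ) • A := by
    ext i j
    fin_cases i <;> fin_cases j <;>
      simp [A, Matrix.mul_apply, Fin.sum_univ_succ, Matrix.cons_val_two, Matrix.cons_val_three, Matrix.cons_val_four, cons_val_five, Matrix.vecHead, Matrix.vecTail, hb, hsb, hd, Complex.conj_ofReal, hxdef, hydef]
    · linear_combination ((2/3:ℂ)) * hx + ((-1/18:ℂ) * Complex.I^2) * hy + ((-1/6:ℂ)) * hI
    · linear_combination ((-1/3:ℂ)) * hx + ((1/36:ℂ) * Complex.I^2) * hy + ((1/12:ℂ)) * hI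
    · linear_combination ((-1/3:ℂ)) * hx + ((1/36:ℂ) * Complex.I^2) * hy + ((1/12:ℂ)) * hI
    · linear_combination (0:ℂ) * hx + (0:ℂ) * hy + (0:ℂ) * hI
    · linear_combination (0:ℂ) * hx + (0:ℂ) * hy + (0:ℂ) * hI
    · linear_combination (0:ℂ) * hx + (0:ℂ) * hy + (0:ℂ) * hI
    · linear_combination ((-1/3:ℂ)) * hx + ((1/36:ℂ) * Complex.I^2) * hy + ((1/12:ℂ)) * hI
    · linear_combination ((2/3:ℂ)) * hx + ((-1/18:ℂ) * Complex.I^2) * hy + ((-1/6:ℂ)) * hI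
    · linear_combination ((-1/3:ℂ)) * hx + ((1/36:ℂ) * Complex.I^2) * hy + ((1/12:ℂ)) * hI
    · linear_combination (0:ℂ) * hx + (0:ℂ) * hy + (0:ℂ) * hI
    · linear_combination (0:ℂ) * hx + (0:ℂ) * hy + (0:ℂ) * hI
    · linear_combination (0:ℂ) * hx + (0:ℂ) * hy + (0:ℂ) * hI
    · linear_combination ((-1/3:ℂ)) * hx + ((1/36:ℂ) * Complex.I^2) * hy + ((1/12:ℂ)) * hI
    · linear_combination ((-1/3:ℂ)) * hx + ((1/36:ℂ) * Complex.I^2) * hy + ((1/12:ℂ)) * hI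
    · linear_combination ((2/3:ℂ)) * hx + ((-1/18:ℂ) * Complex.I^2) * hy + ((-1/6:ℂ)) * hI
    · linear_combination (0:ℂ) * hx + (0:ℂ) * hy + (0:ℂ) * hI
    · linear_combination (0:ℂ) * hx + (0:ℂ) * hy + (0:ℂ) * hI
    · linear_combination (0:ℂ) * hx + (0:ℂ) * hy + (0:ℂ) * hI
    · linear_combination (0:ℂ) * hx + (0:ℂ) * hy + (0:ℂ) * hI
    · linear_combination (0:ℂ) * hx + (0:ℂ) * hy + (0:ℂ) * hI
    · linear_combination (0:ℂ) * hx + (0:ℂ) * hy + (0:ℂ) * hI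
    · linear_combination ((2/3:ℂ)) * hx + ((-1/18:ℂ) * Complex.I^2) * hy + ((-1/6:ℂ)) * hI
    · linear_combination ((-1/3:ℂ)) * hx + ((1/36:ℂ) * Complex.I^2) * hy + ((1/12:ℂ)) * hI
    · linear_combination ((-1/3:ℂ)) * hx + ((1/36:ℂ) * Complex.I^2) * hy + ((1/12:ℂ)) * hI
    · linear_combination (0:ℂ) * hx + (0:ℂ) * hy + (0:ℂ) * hI
    · linear_combination (0:ℂ) * hx + (0:ℂ) * hy + (0:ℂ) * hI
    · linear_combination (0:ℂ) * hx + (0:ℂ) * hy + (0:ℂ) * hI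
    · linear_combination ((-1/3:ℂ)) * hx + ((1/36:ℂ) * Complex.I^2) * hy + ((1/12:ℂ)) * hI
    · linear_combination ((2/3:ℂ)) * hx + ((-1/18:ℂ) * Complex.I^2) * hy + ((-1/6:ℂ)) * hI
    · linear_combination ((-1/3:ℂ)) * hx + ((1/36:ℂ) * Complex.I^2) * hy + ((1/12:ℂ)) * hI
    · linear_combination (0:ℂ) * hx + (0:ℂ) * hy + (0:ℂ) * hI
    · linear_combination (0:ℂ) * hx + (0:ℂ) * hy + (0:ℂ) * hI
    · linear_combination (0:ℂ) * hx + (0:ℂ) * hy + (0:ℂ) * hI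
    · linear_combination ((-1/3:ℂ)) * hx + ((1/36:ℂ) * Complex.I^2) * hy + ((1/12:ℂ)) * hI
    · linear_combination ((-1/3:ℂ)) * hx + ((1/36:ℂ) * Complex.I^2) * hy + ((1/12:ℂ)) * hI
    · linear_combination ((2/3:ℂ)) * hx + ((-1/18:ℂ) * Complex.I^2) * hy + ((-1/6:ℂ)) * hI
  have hPSD : A.PosSemidef := by
    have h1 := Matrix.posSemidef_conjTranspose_mul_self A
    rw [hH.eq, hM] at h1
    refine ⟨hH, fun z => ?_⟩
    have h2 := h1.2 z
    have h5 := h1.smul (a := (1/3:ℂ)) (by rw [Complex.nonneg_iff]; norm_num)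
    rw [smul_smul] at h5
    norm_num at h5
    exact h5.2 z
  have hrank : A.rank = 2 := by
    have hle : A.rank ≤ 2 := by
      have hfac : A = (Matrix.of ![![1, star b], ![b, 1], ![star b, b],
          ![-δ, -δ], ![2 * δ, -δ], ![-δ, 2 * δ]] : Matrix (Fin 6) (Fin 2) ℂ) *
          (Matrix.of ![![1, 0, -1, -3*x/4 - Complex.I*x*y/12, 3*x/4 - Complex.I*x*y/12, Complex.I*x*y/6],
            ![0, 1, -1, -3*x/4 + Complex.I*x*y/12, -(Complex.I*x*y/6), 3*x/4 + Complex.I*x*y/12]] : Matrix (Fin 2) (Fin 6) ℂ) := by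
        ext i j
        fin_cases i <;> fin_cases j <;>
          simp only [A, Matrix.mul_apply, Matrix.of_apply, Matrix.cons_val', Matrix.cons_val_zero,
            Matrix.cons_val_one, Matrix.head_cons, Matrix.head_fin_const, Matrix.empty_val',
            Matrix.cons_val_fin_one, Fin.sum_univ_succ, Fin.sum_univ_zero, Matrix.cons_val_succ,
            Matrix.cons_val_two, Matrix.cons_val_three, Matrix.cons_val_four, cons_val_five,
            Matrix.vecHead, Matrix.vecTail, Function.comp, hb, hsb, hd, Fin.isValue,
            Fin.reduceFinMk, Fin.mk_zero, Fin.mk_one, Complex.star_def, map_add, map_sub, map_neg,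
            map_div₀, map_mul, map_one, map_ofNat, Complex.conj_I, hsy]
        · linear_combination (0:ℂ) * hx + (0:ℂ) * hy + (0:ℂ) * hI
        · linear_combination (0:ℂ) * hx + (0:ℂ) * hy + (0:ℂ) * hI
        · linear_combination (0:ℂ) * hx + (0:ℂ) * hy + (0:ℂ) * hI
        · linear_combination (0:ℂ) * hx + ((1/72:ℂ) * x * Complex.I^2) * hy + ((1/24:ℂ) * x) * hI
        · linear_combination (0:ℂ) * hx + ((-1/36:ℂ) * x * Complex.I^2) * hy + ((-1/12:ℂ) * x) * hI
        · linear_combination (0:ℂ) * hx + ((1/72:ℂ) * x * Complex.I^2) * hy + ((1/24:ℂ) * x) * hI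
        · linear_combination (0:ℂ) * hx + (0:ℂ) * hy + (0:ℂ) * hI
        · linear_combination (0:ℂ) * hx + (0:ℂ) * hy + (0:ℂ) * hI
        · linear_combination (0:ℂ) * hx + (0:ℂ) * hy + (0:ℂ) * hI
        · linear_combination (0:ℂ) * hx + ((1/72:ℂ) * x * Complex.I^2) * hy + ((1/24:ℂ) * x) * hI
        · linear_combination (0:ℂ) * hx + ((1/72:ℂ) * x * Complex.I^2) * hy + ((1/24:ℂ) * x) * hI
        · linear_combination (0:ℂ) * hx + ((-1/36:ℂ) * x * Complex.I^2) * hy + ((-1/12:ℂ) * x) * hI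
        · linear_combination (0:ℂ) * hx + (0:ℂ) * hy + (0:ℂ) * hI
        · linear_combination (0:ℂ) * hx + (0:ℂ) * hy + (0:ℂ) * hI
        · linear_combination (0:ℂ) * hx + (0:ℂ) * hy + (0:ℂ) * hI
        · linear_combination (0:ℂ) * hx + ((-1/36:ℂ) * x * Complex.I^2) * hy + ((-1/12:ℂ) * x) * hI
        · linear_combination (0:ℂ) * hx + ((1/72:ℂ) * x * Complex.I^2) * hy + ((1/24:ℂ) * x) * hI
        · linear_combination (0:ℂ) * hx + ((1/72:ℂ) * x * Complex.I^2) * hy + ((1/24:ℂ) * x) * hI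
        · linear_combination (0:ℂ) * hx + (0:ℂ) * hy + (0:ℂ) * hI
        · linear_combination (0:ℂ) * hx + (0:ℂ) * hy + (0:ℂ) * hI
        · linear_combination (0:ℂ) * hx + (0:ℂ) * hy + (0:ℂ) * hI
        · linear_combination ((-1/2:ℂ)) * hx + (0:ℂ) * hy + (0:ℂ) * hI
        · linear_combination ((1/4:ℂ) + (-1/12:ℂ) * y * Complex.I) * hx + (0:ℂ) * hy + (0:ℂ) * hI
        · linear_combination ((1/4:ℂ) + (1/12:ℂ) * y * Complex.I) * hx + (0:ℂ) * hy + (0:ℂ) * hI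
        · linear_combination (0:ℂ) * hx + (0:ℂ) * hy + (0:ℂ) * hI
        · linear_combination (0:ℂ) * hx + (0:ℂ) * hy + (0:ℂ) * hI
        · linear_combination (0:ℂ) * hx + (0:ℂ) * hy + (0:ℂ) * hI
        · linear_combination ((1/4:ℂ) + (1/12:ℂ) * y * Complex.I) * hx + (0:ℂ) * hy + (0:ℂ) * hI
        · linear_combination ((-1/2:ℂ)) * hx + (0:ℂ) * hy + (0:ℂ) * hI
        · linear_combination ((1/4:ℂ) + (-1/12:ℂ) * y * Complex.I) * hx + (0:ℂ) * hy + (0:ℂ) * hI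
        · linear_combination (0:ℂ) * hx + (0:ℂ) * hy + (0:ℂ) * hI
        · linear_combination (0:ℂ) * hx + (0:ℂ) * hy + (0:ℂ) * hI
        · linear_combination (0:ℂ) * hx + (0:ℂ) * hy + (0:ℂ) * hI
        · linear_combination ((1/4:ℂ) + (-1/12:ℂ) * y * Complex.I) * hx + (0:ℂ) * hy + (0:ℂ) * hI
        · linear_combination ((1/4:ℂ) + (1/12:ℂ) * y * Complex.I) * hx + (0:ℂ) * hy + (0:ℂ) * hI
        · linear_combination ((-1/2:ℂ)) * hx + (0:ℂ) * hy + (0:ℂ) * hI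
      calc A.rank ≤ _ := hfac ▸ Matrix.rank_mul_le_left _ _
      _ ≤ 2 := (Matrix.rank_le_card_width _).trans_eq (Fintype.card_fin 2)
    have hge : 2 ≤ A.rank := by
      set v : Fin 6 → ℂ := fun i => A i 0 with hv
      set w : Fin 6 → ℂ := fun i => A i 3 with hw
      have hvr : v ∈ LinearMap.range A.mulVecLin :=
        ⟨Pi.single 0 1, by ext i; simp [Matrix.mulVecLin_apply, Matrix.mulVec_single, hv]⟩
      have hwr : w ∈ LinearMap.range A.mulVecLin :=
        ⟨Pi.single 3 1, by ext i; simp [Matrix.mulVecLin_apply, Matrix.mulVec_single, hw]⟩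
      have hli : LinearIndependent ℂ ![v, w] := by
        rw [linearIndependent_fin2]
        constructor
        · intro h
          have h3 := congrFun h 3
          simp [hw, A] at h3
        · intro a h
          have h3 := congrFun h 3
          have h0 := congrFun h 0
          simp [hv, hw, A, hd, hxdef] at h3 h0
          have h9 : x^2 = 9 := by linear_combination 9*h0 + 3*x*h3
          rw [hx] at h9
          norm_num at h9
      have hsp : Submodule.span ℂ (Set.range ![v, w]) ≤ LinearMap.range A.mulVecLin := by
        rw [Submodule.span_le]
        rintro t ⟨k, rfl⟩
        fin_cases k
        · exact hvr
        · exact hwr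
      have hcard := finrank_span_eq_card hli
      rw [Matrix.rank]
      calc (2:ℕ) = Module.finrank ℂ (Submodule.span ℂ (Set.range ![v, w])) := by
            rw [hcard]; simp
      _ ≤ _ := Submodule.finrank_mono hsp
    omega
  exact ⟨hH, hPSD, hM, hrank⟩
end

section
/- With δ = √2/3, b = -1/2 + i/(2√3), φ = (1, b, conj(b), -δ, 2δ, -δ) and ψ = (0, 1-|b|², b-conj(b)², δ(conj(b)-1), -δ(2conj(b)+1), δ(conj(b)+2)) in ℂ⁶, the four entrywise products conj(φ)·φ, conj(φ)·ψ, conj(ψ)·φ, conj(ψ)·ψ are linearly independent in ℂ⁶. -/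
/-- The four entrywise products `conj(φ)·φ`, `conj(φ)·ψ`, `conj(ψ)·φ`, `conj(ψ)·ψ`
are linearly independent in `ℂ⁶`. -/
theorem stmt_16 :
    let δ : ℂ := (Real.sqrt 2 : ℂ) / 3
    let b : ℂ := -(1 / 2) + Complex.I / (2 * (Real.sqrt 3 : ℂ))
    let φ : Fin 6 → ℂ := ![1, b, star b, -δ, 2 * δ, -δ]
    let ψ : Fin 6 → ℂ := ![0, 1 - ((‖b‖ : ℝ) : ℂ) ^ 2, b - (star b) ^ 2,
      δ * (star b - 1), -δ * (2 * star b + 1), δ * (star b + 2)]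
    LinearIndependent ℂ
      ![fun i => star (φ i) * φ i, fun i => star (φ i) * ψ i,
        fun i => star (ψ i) * φ i, fun i => star (ψ i) * ψ i] := by
  intro δ b φ ψ
  have h33 : ((Real.sqrt 3 : ℝ) : ℂ) * ((Real.sqrt 3 : ℝ) : ℂ) = 3 := by
    norm_cast; exact Real.mul_self_sqrt (by norm_num)
  have h22 : ((Real.sqrt 2 : ℝ) : ℂ) * ((Real.sqrt 2 : ℝ) : ℂ) = 2 := by
    norm_cast; exact Real.mul_self_sqrt (by norm_num)
  have hs3 : ((Real.sqrt 3 : ℝ) : ℂ) ≠ 0 := by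
    intro h
    rw [h, mul_zero] at h33
    norm_num at h33
  have hbe : b = -(1/2) + Complex.I * ((Real.sqrt 3 : ℝ) : ℂ) / 6 := by
    have h2 : Complex.I / (2 * ((Real.sqrt 3 : ℝ) : ℂ))
        = Complex.I * ((Real.sqrt 3 : ℝ) : ℂ) / 6 := by
      rw [div_eq_div_iff (mul_ne_zero two_ne_zero hs3) (by norm_num : (6:ℂ) ≠ 0)]
      linear_combination (-2) * Complex.I * h33
    show -(1 / 2) + Complex.I / (2 * (Real.sqrt 3 : ℂ)) = _
    rw [h2]
  rw [Fintype.linearIndependent_iff]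
  intro g hg
  have h0 := congrFun hg 0
  have h3 := congrFun hg 3
  have h4 := congrFun hg 4
  have h5 := congrFun hg 5
  simp only [Fin.sum_univ_four, Pi.add_apply, Pi.smul_apply, Pi.zero_apply, smul_eq_mul,
    Matrix.cons_val_zero, Matrix.cons_val_one, Matrix.cons_val_two, Matrix.cons_val_three,
    Matrix.cons_val_four, Matrix.head_cons, Matrix.tail_cons] at h0 h3 h4 h5
  simp only [φ, ψ, Matrix.cons_val_zero, Matrix.cons_val_one, Matrix.cons_val_two,
    Matrix.cons_val_three, Matrix.cons_val_four, Matrix.head_cons, Matrix.tail_cons,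
    show (![1, b, star b, -δ, 2 * δ, -δ] : Fin 6 → ℂ) 5 = -δ from rfl,
    show (![0, 1 - ((‖b‖ : ℝ) : ℂ) ^ 2, b - (star b) ^ 2,
      δ * (star b - 1), -δ * (2 * star b + 1), δ * (star b + 2)] : Fin 6 → ℂ) 5
      = δ * (star b + 2) from rfl] at h0 h3 h4 h5
  rw [hbe] at h3 h4 h5
  simp only [δ, Complex.star_def, map_mul, map_add, map_sub, map_neg, map_div₀,
    map_one, map_ofNat, Complex.conj_I, Complex.conj_ofReal, star_one, star_zero] at h0 h3 h4 h5
  have hg0 : g 0 = 0 := by simpa using h0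
  rw [hg0] at h3 h4 h5
  have hA : g 1 + g 2 = 0 := by
    linear_combination (-(3:ℂ)/2) * h5 + ((3:ℂ)/2) * h3 - ((g 1 + g 2)/2) * h22
  have hg3 : g 3 = 0 := by
    linear_combination (2:ℂ) * h3 - ((1:ℂ)/2) * h4
      - ((Real.sqrt 2 : ℂ) * (Real.sqrt 2 : ℂ)/3) * hA - (g 3/2) * h22
  have key : Complex.I * (Real.sqrt 3 : ℂ) * g 1 = 0 := by
    linear_combination ((27:ℂ)/2) * h3
      + (3 * (Real.sqrt 2 : ℂ) * (Real.sqrt 2 : ℂ)/2)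
          * (-(3/2 : ℂ) + Complex.I * (Real.sqrt 3 : ℂ)/6) * hA
      - (3 * (Real.sqrt 2 : ℂ) * (Real.sqrt 2 : ℂ)/2)
          * ((-(3/2 : ℂ) + Complex.I * (Real.sqrt 3 : ℂ)/6)
            * (-(3/2 : ℂ) - Complex.I * (Real.sqrt 3 : ℂ)/6)) * hg3
      - (Complex.I * (Real.sqrt 3 : ℂ) * g 1/2) * h22
  have hg1 : g 1 = 0 := by
    rcases mul_eq_zero.mp key with h | h
    · exact absurd h (mul_ne_zero Complex.I_ne_zero hs3)
    · exact h
  have hg2 : g 2 = 0 := by linear_combination hA - hg1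
  intro i
  fin_cases i
  · exact hg0
  · exact hg1
  · exact hg2
  · exact hg3
end
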